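/- Let X = ∏_{t∈T} X_t be a product of nonempty topological spaces. Then every nonempty S-open subset A of X is dense in X with respect to the Tychonoff topology τ. -/
import Mathlib


open Function Filter Topology

/-- `Sigma1 x` (σ₁(x)): the set of points differing from `x` in at most one coordinate. -/
def Sigma1 {T : Type*} {X : T → Type*} (x : ∀ t, X t) : Set (∀ t, X t) :=
  {y | {t | y t ≠ x t}.Subsingleton}

/-- A set `A` is `S`-open if `σ₁(x) ⊆ A` for every `x ∈ A`. -/
def SOpen {T : Type*} {X : T → Type*} (A : Set (∀ t, X t)) : Prop :=
  ∀ x ∈ A, Sigma1 x ⊆ A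

/-- Every nonempty S-open subset of a product of nonempty topological spaces is dense
in the Tychonoff topology. -/
theorem sOpen_dense {T : Type*} {X : T → Type*} [∀ t, TopologicalSpace (X t)]
    [∀ t, Nonempty (X t)] {A : Set (∀ t, X t)} (hA : SOpen A) (hne : A.Nonempty) :
    Dense A := by
  classical
  -- key: A is closed under changing finitely many coordinates
  have key : ∀ (s : Finset T) (x : ∀ t, X t), x ∈ A →
      ∀ y : ∀ t, X t, (∀ t ∉ s, y t = x t) → y ∈ A := by
    intro s
    induction s using Finset.induction_on with
    | empty =>
      intro x hx y hy
      have : y = x := funext fun t => hy t (by simp)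
      rwa [this]
    | @insert t s ht ih =>
      intro x hx y hy
      set z : ∀ t, X t := Function.update y t (x t) with hz
      have hzA : z ∈ A := by
        apply ih x hx
        intro t' ht'
        by_cases h : t' = t
        · subst h; simp [hz]
        · rw [hz, Function.update_of_ne h]
          exact hy t' (by simp [h, ht'])
      apply hA z hzA
      have hdiff : ∀ t', y t' ≠ z t' → t' = t := by
        intro t' h'
        by_contra h
        rw [hz, Function.update_of_ne h] at h'
        exact h' rfl
      intro t1 h1 t2 h2
      rw [hdiff t1 h1, hdiff t2 h2]
  rw [dense_iff_inter_open]
  intro U hU ⟨u, hu⟩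
  obtain ⟨I, V, hV, hsub⟩ := isOpen_pi_iff.mp hU u hu
  obtain ⟨a, ha⟩ := hne
  refine ⟨fun t => if t ∈ I then u t else a t, ?_, ?_⟩
  · apply hsub
    intro t ht
    have ht' : t ∈ I := ht
    simpa [ht'] using (hV t ht').2
  · apply key I a ha
    intro t ht
    simp [ht]
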